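/- Let n ≥ 1, T > 0, α₁, …, αₙ ∈ (0,1], p > max{1/α_j : j ∈ {1,…,n}}, let f = (f₁,…,fₙ) : ℝⁿ × [0,T] → ℝⁿ be an L^p-Carathéodory function, and ξ ∈ ℝⁿ. Then for every continuous φ : [0,T] → ℝⁿ, each of the functions t ↦ ξ_j + (1/Γ(α_j)) ∫₀ᵗ (t−s)^{α_j−1} f_j(φ(s),s) ds, j ∈ {1,…,n}, is continuous on [0,T]; hence the operator T(φ)(t) := ξ + (J^{α_1} f₁(φ(·),·)(t), …, J^{α_n} f_n(φ(·),·)(t)) maps C([0,T];ℝⁿ) into itself. -/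

import Mathlib

open MeasureTheory Real Set

/-- The Riemann–Liouville fractional integral of order `α`:
`J^α g (t) = (1/Γ(α)) ∫₀ᵗ (t-s)^(α-1) g(s) ds`. -/
noncomputable def rlInt {E : Type*} [NormedAddCommGroup E] [NormedSpace ℝ E]
    (α : ℝ) (g : ℝ → E) (t : ℝ) : E :=
  (Real.Gamma α)⁻¹ • ∫ s in (0:ℝ)..t, (t - s) ^ (α - 1) • g s

/-- `f : ℝⁿ × [0,T] → ℝⁿ` is a Carathéodory function: `x ↦ f x t` is continuous for a.e.
`t ∈ [0,T]` and `t ↦ f x t` is Lebesgue measurable for every `x`. -/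
def IsCaratheodory {n : ℕ} (T : ℝ)
    (f : EuclideanSpace ℝ (Fin n) → ℝ → EuclideanSpace ℝ (Fin n)) : Prop :=
  (∀ᵐ t ∂(volume.restrict (Icc (0:ℝ) T)), Continuous fun x => f x t) ∧
  ∀ x, Measurable fun t => f x t

/-- `f` is an `L^p`-Carathéodory function: Carathéodory, with an `L^p` growth bound
`‖f(x,t)‖ ≤ C‖x‖ + γ(t)` and an `L^p` Lipschitz bound `‖f(x,t) - f(y,t)‖ ≤ ℓ(t)‖x - y‖`. -/
def IsLpCaratheodory {n : ℕ} (p T : ℝ)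
    (f : EuclideanSpace ℝ (Fin n) → ℝ → EuclideanSpace ℝ (Fin n)) : Prop :=
  IsCaratheodory T f ∧
  (∃ C > (0:ℝ), ∃ γ : ℝ → ℝ, MemLp γ (ENNReal.ofReal p) (volume.restrict (Icc (0:ℝ) T)) ∧
    ∀ᵐ t ∂(volume.restrict (Icc (0:ℝ) T)), ∀ x, ‖f x t‖ ≤ C * ‖x‖ + γ t) ∧
  (∃ ℓ : ℝ → ℝ, MemLp ℓ (ENNReal.ofReal p) (volume.restrict (Icc (0:ℝ) T)) ∧
    ∀ᵐ t ∂(volume.restrict (Icc (0:ℝ) T)), ∀ x y, ‖f x t - f y t‖ ≤ ℓ t * ‖x - y‖)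

/-- The operator `𝒯(φ)(t) = ξ + (J^{α_1} f₁(φ(·),·)(t), …, J^{α_n} f_n(φ(·),·)(t))`
associated to the fractional system. -/
noncomputable def caraOp {n : ℕ} (α : Fin n → ℝ)
    (f : EuclideanSpace ℝ (Fin n) → ℝ → EuclideanSpace ℝ (Fin n))
    (ξ : EuclideanSpace ℝ (Fin n)) (φ : ℝ → EuclideanSpace ℝ (Fin n)) :
    ℝ → EuclideanSpace ℝ (Fin n) :=
  fun t => ξ + (show EuclideanSpace ℝ (Fin n) from WithLp.toLp 2 (fun j => rlInt (α j) (fun s => f (φ s) s j) t))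

section Helpers
open intervalIntegral
open scoped ENNReal NNReal

lemma memLp_of_integrable_abs_rpow {μ : Measure ℝ} {q : ℝ} (hq : 0 < q) {f : ℝ → ℝ}
    (hf : AEStronglyMeasurable f μ) (h : Integrable (fun s => |f s| ^ q) μ) :
    MemLp f (ENNReal.ofReal q) μ := by
  have hq0 : ENNReal.ofReal q ≠ 0 := by simp [ENNReal.ofReal_eq_zero, not_le, hq]
  have hqt : ENNReal.ofReal q ≠ ∞ := ENNReal.ofReal_ne_top
  have hiff := memLp_norm_rpow_iff (p := ENNReal.ofReal q) hf hq0 hqt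
  rw [ENNReal.div_self hq0 hqt] at hiff
  apply hiff.1
  rw [memLp_one_iff_integrable]
  have : (fun x => ‖f x‖ ^ (ENNReal.ofReal q).toReal) = fun s => |f s| ^ q := by
    funext s
    rw [Real.norm_eq_abs, ENNReal.toReal_ofReal hq.le]
  rw [this]; exact h

lemma ker_intervalIntegrable {r : ℝ} (hr : -1 < r) (c a b : ℝ) :
    IntervalIntegrable (fun s => (c - s) ^ r) volume a b := by
  have h := (intervalIntegrable_rpow' (a := c - a) (b := c - b) hr).comp_sub_left c
  simpa using h

lemma ker_integral {r : ℝ} (hr : -1 < r) (a b c : ℝ) :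
    ∫ s in a..b, (c - s) ^ r = ((c - a) ^ (r + 1) - (c - b) ^ (r + 1)) / (r + 1) := by
  rw [intervalIntegral.integral_comp_sub_left (fun u => u ^ r) c, integral_rpow (Or.inl hr)]

lemma rpow_sub_rpow_le {x y q : ℝ} (hy : 0 ≤ y) (hxy : y ≤ x) (hq : 1 ≤ q) :
    (x - y) ^ q ≤ x ^ q - y ^ q := by
  have hxy' : 0 ≤ x - y := by linarith
  have h := NNReal.add_rpow_le_rpow_add ((x - y).toNNReal) (y.toNNReal) hq
  have h2 := NNReal.coe_le_coe.2 h
  rw [NNReal.coe_add, NNReal.coe_rpow, NNReal.coe_rpow, NNReal.coe_rpow] at h2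
  rw [Real.coe_toNNReal _ hxy', Real.coe_toNNReal _ hy] at h2
  have : ((x - y).toNNReal + y.toNNReal : ℝ≥0) = x.toNNReal := by
    ext
    rw [NNReal.coe_add, Real.coe_toNNReal _ hxy', Real.coe_toNNReal _ hy,
      Real.coe_toNNReal _ (hy.trans hxy)]
    ring
  rw [this, Real.coe_toNNReal _ (hy.trans hxy)] at h2
  linarith

lemma ae_ne_restrict (c : ℝ) (μ' : Measure ℝ) (S : Set ℝ) [NullSingletonClass μ'] :
    ∀ᵐ s ∂(μ'.restrict S), s ≠ c := by
  refine ae_restrict_of_ae ?_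
  rw [ae_iff]
  have : {s : ℝ | ¬ s ≠ c} = {c} := by ext s; simp
  rw [this]
  exact measure_singleton c

lemma ker_meas (c β : ℝ) : Measurable (fun s : ℝ => (c - s) ^ β) :=
  (measurable_const.sub measurable_id).pow_const β

lemma ker_memLp {β q : ℝ} (hβ : -1 < β) (hβ0 : β ≤ 0) (hq : 1 ≤ q) (hr : -1 < β * q)
    {a b c : ℝ} (hbc : b ≤ c) :
    MemLp (fun s => (c - s) ^ β) (ENNReal.ofReal q) (volume.restrict (Ioc a b)) := by
  apply memLp_of_integrable_abs_rpow (lt_of_lt_of_le zero_lt_one hq)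
  · exact (ker_meas c β).aestronglyMeasurable
  · have hker : IntegrableOn (fun s => (c - s) ^ (β * q)) (Ioc a b) :=
      (ker_intervalIntegrable hr c a b).1
    refine hker.integrable.mono (((ker_meas c β).abs.pow_const q).aestronglyMeasurable) ?_
    filter_upwards [ae_restrict_mem measurableSet_Ioc, ae_ne_restrict c volume (Ioc a b)]
      with s hs hne
    have hcs : 0 < c - s := by
      rcases lt_or_eq_of_le (hs.2.trans hbc) with h | h
      · linarith
      · exact absurd h hne
    have e1 : |(c - s) ^ β| = (c - s) ^ β := abs_of_nonneg (Real.rpow_nonneg hcs.le β)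
    rw [Real.norm_eq_abs, Real.norm_eq_abs, e1, ← Real.rpow_mul hcs.le]

lemma kerdiff_bound {β q : ℝ} (hβ0 : β ≤ 0) (hq : 1 ≤ q) (hσ : 0 < β * q + 1)
    {a b : ℝ} (h0a : 0 ≤ a) (hab : a ≤ b) :
    ∫ s in Ioc 0 a, |(b - s) ^ β - (a - s) ^ β| ^ q ≤ (b - a) ^ (β * q + 1) / (β * q + 1) := by
  set r := β * q with hr_def
  have hr : -1 < r := by linarith
  have h1 : IntegrableOn (fun s => (a - s) ^ r) (Ioc 0 a) := (ker_intervalIntegrable hr a 0 a).1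
  have h2 : IntegrableOn (fun s => (b - s) ^ r) (Ioc 0 a) := (ker_intervalIntegrable hr b 0 a).1
  have step1 : ∫ s in Ioc 0 a, |(b - s) ^ β - (a - s) ^ β| ^ q
      ≤ ∫ s in Ioc 0 a, ((a - s) ^ r - (b - s) ^ r) := by
    refine integral_mono_of_nonneg ?_ (h1.sub h2) ?_
    · exact Filter.Eventually.of_forall fun s => Real.rpow_nonneg (abs_nonneg _) q
    · filter_upwards [ae_restrict_mem measurableSet_Ioc, ae_ne_restrict a volume (Ioc 0 a)]
        with s hs hne
      have has : 0 < a - s := by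
        rcases lt_or_eq_of_le hs.2 with h | h
        · linarith
        · exact absurd h hne
      have hbs : 0 < b - s := by linarith
      have hmono : (b - s) ^ β ≤ (a - s) ^ β :=
        Real.rpow_le_rpow_of_nonpos has (by linarith) hβ0
      have habs : |(b - s) ^ β - (a - s) ^ β| = (a - s) ^ β - (b - s) ^ β := by
        rw [abs_sub_comm, abs_of_nonneg (by linarith)]
      rw [habs]
      have key := rpow_sub_rpow_le (Real.rpow_nonneg hbs.le β) hmono hq
      calc ((a - s) ^ β - (b - s) ^ β) ^ q ≤ ((a - s) ^ β) ^ q - ((b - s) ^ β) ^ q := key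
        _ = (a - s) ^ r - (b - s) ^ r := by
            rw [← Real.rpow_mul has.le, ← Real.rpow_mul hbs.le]
  refine step1.trans ?_
  have e0 : ∫ s in Ioc 0 a, ((a - s) ^ r - (b - s) ^ r)
      = (∫ s in (0:ℝ)..a, (a - s) ^ r) - ∫ s in (0:ℝ)..a, (b - s) ^ r := by
    rw [← intervalIntegral.integral_sub (ker_intervalIntegrable hr a 0 a)
      (ker_intervalIntegrable hr b 0 a), intervalIntegral.integral_of_le h0a]
  rw [e0, ker_integral hr 0 a a, ker_integral hr 0 a b]
  have hσ' : (0:ℝ) < r + 1 := hσ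
  have haa : a - a = 0 := sub_self a
  have hz : (0:ℝ) ^ (r + 1) = 0 := Real.zero_rpow hσ'.ne'
  rw [haa, hz, sub_zero, sub_zero]
  have hmono2 : (a - 0) ^ (r + 1) ≤ (b - 0) ^ (r + 1) := by
    rw [sub_zero, sub_zero]
    exact Real.rpow_le_rpow h0a hab hσ'.le
  rw [div_sub_div_same]
  simp only [sub_zero] at hmono2 ⊢
  have hfin : a ^ (r + 1) - (b ^ (r + 1) - (b - a) ^ (r + 1)) ≤ (b - a) ^ (r + 1) := by
    linarith
  gcongr

lemma ker_bound {β q : ℝ} (hq : 1 ≤ q) (hσ : 0 < β * q + 1) {a b : ℝ} (hab : a ≤ b) :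
    ∫ s in Ioc a b, |(b - s) ^ β| ^ q ≤ (b - a) ^ (β * q + 1) / (β * q + 1) := by
  set r := β * q with hr_def
  have hr : -1 < r := by linarith
  have e1 : ∫ s in Ioc a b, |(b - s) ^ β| ^ q = ∫ s in Ioc a b, (b - s) ^ r := by
    refine integral_congr_ae ?_
    filter_upwards [ae_restrict_mem measurableSet_Ioc, ae_ne_restrict b volume (Ioc a b)]
      with s hs hne
    have hbs : 0 < b - s := by
      rcases lt_or_eq_of_le hs.2 with h | h
      · linarith
      · exact absurd h hne
    rw [abs_of_nonneg (Real.rpow_nonneg hbs.le β), ← Real.rpow_mul hbs.le]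
  rw [e1, ← intervalIntegral.integral_of_le hab, ker_integral hr a b b, sub_self,
    Real.zero_rpow (by linarith : r + 1 ≠ 0), sub_zero]

lemma holder_piece {p q : ℝ} (hpq : p.HolderConjugate q) {S : Set ℝ}
    {k g : ℝ → ℝ} (hk : MemLp k (ENNReal.ofReal q) (volume.restrict S))
    (hg : MemLp g (ENNReal.ofReal p) (volume.restrict S)) :
    IntegrableOn (fun s => k s * g s) S ∧
    |∫ s in S, k s * g s| ≤ (∫ s in S, |k s| ^ q) ^ (1/q) * (∫ s in S, |g s| ^ p) ^ (1/p) := by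
  have hint : IntegrableOn (fun s => k s * g s) S := by
    rw [IntegrableOn, ← memLp_one_iff_integrable]
    haveI := hpq.symm.ennrealOfReal
    have := hg.smul hk (r := 1)
    exact this
  refine ⟨hint, ?_⟩
  have h1 : |∫ s in S, k s * g s| ≤ ∫ s in S, ‖k s‖ * ‖g s‖ := by
    rw [← Real.norm_eq_abs]
    calc ‖∫ s in S, k s * g s‖ ≤ ∫ s in S, ‖k s * g s‖ :=
          MeasureTheory.norm_integral_le_integral_norm _
      _ = ∫ s in S, ‖k s‖ * ‖g s‖ := by
          refine integral_congr_ae (Filter.Eventually.of_forall fun s => ?_)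
          simp [norm_mul]
  refine h1.trans ?_
  have h2 := integral_mul_norm_le_Lp_mul_Lq hpq.symm hk hg
  simpa only [Real.norm_eq_abs] using h2

lemma key_estimate {T β p q : ℝ} (hβ : -1 < β) (hβ0 : β ≤ 0)
    (hpq : p.HolderConjugate q) (hσ : 0 < β * q + 1)
    {g : ℝ → ℝ} (hg : MemLp g (ENNReal.ofReal p) (volume.restrict (Icc 0 T)))
    {a b : ℝ} (ha : a ∈ Icc (0:ℝ) T) (hb : b ∈ Icc (0:ℝ) T) (hab : a ≤ b) :
    |(∫ s in (0:ℝ)..b, (b - s) ^ β * g s) - ∫ s in (0:ℝ)..a, (a - s) ^ β * g s|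
      ≤ 2 * ((β * q + 1)⁻¹) ^ (1/q) * (∫ s in Icc (0:ℝ) T, |g s| ^ p) ^ (1/p)
        * (b - a) ^ ((β * q + 1) / q) := by
  have hq1 : 1 ≤ q := hpq.symm.lt.le
  have hq0 : 0 < q := by linarith
  have hr : -1 < β * q := by linarith
  set σ := β * q + 1 with hσ_def
  set Np := ∫ s in Icc (0:ℝ) T, |g s| ^ p with hNp_def
  have hNp0 : 0 ≤ Np := integral_nonneg fun s => Real.rpow_nonneg (abs_nonneg _) p
  have hNpInt : IntegrableOn (fun s => |g s| ^ p) (Icc 0 T) := by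
    have h := hg.integrable_norm_rpow (by simp [ENNReal.ofReal_eq_zero, not_le, hpq.pos])
      ENNReal.ofReal_ne_top
    simpa [IntegrableOn, Real.norm_eq_abs, ENNReal.toReal_ofReal hpq.nonneg] using h
  have hsub1 : Ioc (0:ℝ) a ⊆ Icc 0 T := fun s hs => ⟨hs.1.le, hs.2.trans ha.2⟩
  have hsub2 : Ioc a b ⊆ Icc 0 T := fun s hs => ⟨ha.1.trans hs.1.le, hs.2.trans hb.2⟩
  have hsub3 : Ioc (0:ℝ) b ⊆ Icc 0 T := fun s hs => ⟨hs.1.le, hs.2.trans hb.2⟩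
  have hg1 := hg.mono_measure (Measure.restrict_mono hsub1 le_rfl)
  have hg2 := hg.mono_measure (Measure.restrict_mono hsub2 le_rfl)
  have hg3 := hg.mono_measure (Measure.restrict_mono hsub3 le_rfl)
  -- L^p integrals over subsets bounded by Np
  have hgsub : ∀ S : Set ℝ, S ⊆ Icc 0 T → (∫ s in S, |g s| ^ p) ≤ Np := by
    intro S hS
    refine setIntegral_mono_set hNpInt ?_ (HasSubset.Subset.eventuallyLE hS)
    exact Filter.Eventually.of_forall fun s => Real.rpow_nonneg (abs_nonneg _) p
  -- kernels are in L^q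
  have hk1 : MemLp (fun s => (b - s) ^ β - (a - s) ^ β) (ENNReal.ofReal q)
      (volume.restrict (Ioc 0 a)) :=
    (ker_memLp hβ hβ0 hq1 hr hab).sub (ker_memLp hβ hβ0 hq1 hr le_rfl)
  have hk1' : MemLp (fun s => (a - s) ^ β) (ENNReal.ofReal q) (volume.restrict (Ioc 0 a)) :=
    ker_memLp hβ hβ0 hq1 hr le_rfl
  have hk2 : MemLp (fun s => (b - s) ^ β) (ENNReal.ofReal q) (volume.restrict (Ioc a b)) :=
    ker_memLp hβ hβ0 hq1 hr le_rfl
  have hk3 : MemLp (fun s => (b - s) ^ β) (ENNReal.ofReal q) (volume.restrict (Ioc 0 b)) :=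
    ker_memLp hβ hβ0 hq1 hr le_rfl
  obtain ⟨hintA, hA⟩ := holder_piece hpq hk1 hg1
  obtain ⟨hintB, hB⟩ := holder_piece hpq hk2 hg2
  obtain ⟨hint3, -⟩ := holder_piece hpq hk3 hg3
  obtain ⟨hint1, -⟩ := holder_piece hpq hk1' hg1
  -- interval integrabilities
  have I3a : IntervalIntegrable (fun s => (b - s) ^ β * g s) volume 0 a :=
    (intervalIntegrable_iff_integrableOn_Ioc_of_le ha.1).2
      (hint3.mono_set (Ioc_subset_Ioc le_rfl hab))
  have I3ab : IntervalIntegrable (fun s => (b - s) ^ β * g s) volume a b :=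
    (intervalIntegrable_iff_integrableOn_Ioc_of_le hab).2 hintB
  have I1 : IntervalIntegrable (fun s => (a - s) ^ β * g s) volume 0 a :=
    (intervalIntegrable_iff_integrableOn_Ioc_of_le ha.1).2 hint1
  -- split the difference
  have hsplit : (∫ s in (0:ℝ)..b, (b - s) ^ β * g s) - ∫ s in (0:ℝ)..a, (a - s) ^ β * g s
      = (∫ s in (0:ℝ)..a, ((b - s) ^ β - (a - s) ^ β) * g s)
        + ∫ s in a..b, (b - s) ^ β * g s := by
    rw [← intervalIntegral.integral_add_adjacent_intervals I3a I3ab]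
    have : ∫ s in (0:ℝ)..a, ((b - s) ^ β - (a - s) ^ β) * g s
        = (∫ s in (0:ℝ)..a, (b - s) ^ β * g s) - ∫ s in (0:ℝ)..a, (a - s) ^ β * g s := by
      rw [← intervalIntegral.integral_sub I3a I1]
      congr 1; funext s; ring
    rw [this]; ring
  rw [hsplit]
  -- bound each piece by M
  set M := (σ⁻¹) ^ (1/q) * Np ^ (1/p) * (b - a) ^ (σ / q) with hM_def
  have hker_pow : ((b - a) ^ σ / σ) ^ (1/q) = (σ⁻¹) ^ (1/q) * (b - a) ^ (σ / q) := by
    rw [div_eq_mul_inv, Real.mul_rpow (Real.rpow_nonneg (by linarith) σ) (by positivity),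
      ← Real.rpow_mul (by linarith : (0:ℝ) ≤ b - a), mul_one_div]
    ring
  have hpieceA : |∫ s in (0:ℝ)..a, ((b - s) ^ β - (a - s) ^ β) * g s| ≤ M := by
    rw [intervalIntegral.integral_of_le ha.1]
    refine hA.trans ?_
    have h1 : (∫ s in Ioc (0:ℝ) a, |(b - s) ^ β - (a - s) ^ β| ^ q) ^ (1/q)
        ≤ ((b - a) ^ σ / σ) ^ (1/q) :=
      Real.rpow_le_rpow (integral_nonneg fun s => Real.rpow_nonneg (abs_nonneg _) q)
        (kerdiff_bound hβ0 hq1 hσ ha.1 hab) (one_div_nonneg.2 hq0.le)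
    have h2 : (∫ s in Ioc (0:ℝ) a, |g s| ^ p) ^ (1/p) ≤ Np ^ (1/p) :=
      Real.rpow_le_rpow (integral_nonneg fun s => Real.rpow_nonneg (abs_nonneg _) p)
        (hgsub _ hsub1) (one_div_nonneg.2 hpq.pos.le)
    calc _ ≤ ((b - a) ^ σ / σ) ^ (1/q) * (Np ^ (1/p)) := by
          refine mul_le_mul h1 h2
            (Real.rpow_nonneg (integral_nonneg fun s => Real.rpow_nonneg (abs_nonneg _) p) _)
            (Real.rpow_nonneg (div_nonneg (Real.rpow_nonneg (by linarith) σ) (by linarith)) _)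
      _ = M := by rw [hker_pow, hM_def]; ring
  have hpieceB : |∫ s in a..b, (b - s) ^ β * g s| ≤ M := by
    rw [intervalIntegral.integral_of_le hab]
    refine hB.trans ?_
    have h1 : (∫ s in Ioc a b, |(b - s) ^ β| ^ q) ^ (1/q) ≤ ((b - a) ^ σ / σ) ^ (1/q) :=
      Real.rpow_le_rpow (integral_nonneg fun s => Real.rpow_nonneg (abs_nonneg _) q)
        (ker_bound hq1 hσ hab) (one_div_nonneg.2 hq0.le)
    have h2 : (∫ s in Ioc a b, |g s| ^ p) ^ (1/p) ≤ Np ^ (1/p) :=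
      Real.rpow_le_rpow (integral_nonneg fun s => Real.rpow_nonneg (abs_nonneg _) p)
        (hgsub _ hsub2) (one_div_nonneg.2 hpq.pos.le)
    calc _ ≤ ((b - a) ^ σ / σ) ^ (1/q) * (Np ^ (1/p)) := by
          refine mul_le_mul h1 h2
            (Real.rpow_nonneg (integral_nonneg fun s => Real.rpow_nonneg (abs_nonneg _) p) _)
            (Real.rpow_nonneg (div_nonneg (Real.rpow_nonneg (by linarith) σ) (by linarith)) _)
      _ = M := by rw [hker_pow, hM_def]; ring
  calc |(∫ s in (0:ℝ)..a, ((b - s) ^ β - (a - s) ^ β) * g s) + ∫ s in a..b, (b - s) ^ β * g s|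
      ≤ |∫ s in (0:ℝ)..a, ((b - s) ^ β - (a - s) ^ β) * g s|
        + |∫ s in a..b, (b - s) ^ β * g s| := abs_add_le _ _
    _ ≤ M + M := add_le_add hpieceA hpieceB
    _ = 2 * (σ⁻¹) ^ (1/q) * Np ^ (1/p) * (b - a) ^ (σ / q) := by rw [hM_def]; ring

lemma continuousOn_fracInt {T β p q : ℝ} (hβ : -1 < β) (hβ0 : β ≤ 0)
    (hpq : p.HolderConjugate q) (hσ : 0 < β * q + 1)
    {g : ℝ → ℝ} (hg : MemLp g (ENNReal.ofReal p) (volume.restrict (Icc 0 T))) :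
    ContinuousOn (fun t => ∫ s in (0:ℝ)..t, (t - s) ^ β * g s) (Icc 0 T) := by
  set e := (β * q + 1) / q with he_def
  set K := 2 * ((β * q + 1)⁻¹) ^ (1/q) * (∫ s in Icc (0:ℝ) T, |g s| ^ p) ^ (1/p) with hK_def
  have hq0 : 0 < q := lt_of_lt_of_le zero_lt_one hpq.symm.lt.le
  have he : 0 < e := div_pos hσ hq0
  have hK0 : 0 ≤ K := by
    have h1 : 0 ≤ (∫ s in Icc (0:ℝ) T, |g s| ^ p) ^ (1/p) :=
      Real.rpow_nonneg (integral_nonneg fun s => Real.rpow_nonneg (abs_nonneg _) p) _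
    have h2 : 0 ≤ ((β * q + 1)⁻¹) ^ (1/q) := Real.rpow_nonneg (by positivity) _
    exact mul_nonneg (mul_nonneg (by norm_num) h2) h1
  intro t₀ ht₀
  have hbound : ∀ t ∈ Icc (0:ℝ) T,
      dist (∫ s in (0:ℝ)..t, (t - s) ^ β * g s) (∫ s in (0:ℝ)..t₀, (t₀ - s) ^ β * g s)
        ≤ K * |t - t₀| ^ e := by
    intro t ht
    rcases le_total t t₀ with h | h
    · have hkey := key_estimate hβ hβ0 hpq hσ hg ht ht₀ h
      rw [Real.dist_eq, abs_sub_comm]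
      have habs : |t - t₀| = t₀ - t := by rw [abs_sub_comm, abs_of_nonneg (by linarith)]
      rw [habs]
      calc _ ≤ 2 * ((β * q + 1)⁻¹) ^ (1/q) * (∫ s in Icc (0:ℝ) T, |g s| ^ p) ^ (1/p)
            * (t₀ - t) ^ e := hkey
        _ = K * (t₀ - t) ^ e := by rw [hK_def]
    · have hkey := key_estimate hβ hβ0 hpq hσ hg ht₀ ht h
      rw [Real.dist_eq]
      have habs : |t - t₀| = t - t₀ := abs_of_nonneg (by linarith)
      rw [habs]
      calc _ ≤ 2 * ((β * q + 1)⁻¹) ^ (1/q) * (∫ s in Icc (0:ℝ) T, |g s| ^ p) ^ (1/p)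
            * (t - t₀) ^ e := hkey
        _ = K * (t - t₀) ^ e := by rw [hK_def]
  have habs_tend : Filter.Tendsto (fun t => |t - t₀|) (nhdsWithin t₀ (Icc 0 T)) (nhds 0) := by
    have : Filter.Tendsto (fun t : ℝ => |t - t₀|) (nhds t₀) (nhds 0) := by
      have hc : Continuous fun t : ℝ => |t - t₀| := (continuous_id.sub continuous_const).abs
      have := hc.tendsto t₀
      simpa using this
    exact this.mono_left nhdsWithin_le_nhds
  have hrpow_tend : Filter.Tendsto (fun t => |t - t₀| ^ e) (nhdsWithin t₀ (Icc 0 T)) (nhds 0) := by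
    have hc : ContinuousAt (fun x : ℝ => x ^ e) 0 :=
      Real.continuousAt_rpow_const 0 e (Or.inr he.le)
    have := hc.tendsto.comp habs_tend
    simpa [Function.comp_def, Real.zero_rpow he.ne'] using this
  have htend : Filter.Tendsto (fun t => K * |t - t₀| ^ e) (nhdsWithin t₀ (Icc 0 T)) (nhds 0) := by
    simpa using hrpow_tend.const_mul K
  refine tendsto_iff_dist_tendsto_zero.2 ?_
  refine squeeze_zero' ?_ ?_ htend
  · exact Filter.Eventually.of_forall fun t => dist_nonneg
  · filter_upwards [self_mem_nhdsWithin] with t ht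
    exact hbound t ht

lemma coord_le_norm {n : ℕ} (v : EuclideanSpace ℝ (Fin n)) (j : Fin n) : |v j| ≤ ‖v‖ := by
  rw [EuclideanSpace.norm_eq, ← Real.sqrt_sq_eq_abs]
  apply Real.sqrt_le_sqrt
  have := Finset.single_le_sum (f := fun i => ‖v i‖ ^ 2) (fun i _ => sq_nonneg _)
    (Finset.mem_univ j)
  simpa [Real.norm_eq_abs, sq_abs] using this

lemma comp_aestronglyMeasurable {n : ℕ} {T : ℝ}
    {f : EuclideanSpace ℝ (Fin n) → ℝ → EuclideanSpace ℝ (Fin n)}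
    (hcont : ∀ᵐ t ∂(volume.restrict (Icc (0:ℝ) T)), Continuous fun x => f x t)
    (hmeas : ∀ x, Measurable fun t => f x t)
    {ψ : ℝ → EuclideanSpace ℝ (Fin n)} (hψ : Continuous ψ) :
    AEStronglyMeasurable (fun s => f (ψ s) s) (volume.restrict (Icc (0:ℝ) T)) := by
  classical
  set μ := volume.restrict (Icc (0:ℝ) T) with hμ
  set N := toMeasurable μ {t | ¬ Continuous fun x => f x t} with hN
  have hNmeas : MeasurableSet N := measurableSet_toMeasurable _ _
  have hNnull : μ N = 0 := by
    rw [hN, measure_toMeasurable]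
    exact hcont
  set f' : EuclideanSpace ℝ (Fin n) → ℝ → EuclideanSpace ℝ (Fin n) :=
    fun x t => if t ∈ N then 0 else f x t with hf'
  have hcont' : ∀ t, Continuous fun x => f' x t := by
    intro t
    by_cases ht : t ∈ N
    · simp only [hf', if_pos ht]; exact continuous_const
    · simp only [hf', if_neg ht]
      by_contra hcc
      exact ht (subset_toMeasurable μ _ hcc)
  have hmeas' : ∀ x, Measurable fun t => f' x t := by
    intro x
    exact Measurable.ite hNmeas measurable_const (hmeas x)
  have hjoint : Measurable (Function.uncurry f') :=
    measurable_uncurry_of_continuous_of_measurable hcont' hmeas'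
  have hcomp : Measurable fun s => f' (ψ s) s :=
    hjoint.comp ((hψ.measurable).prodMk measurable_id)
  refine hcomp.aestronglyMeasurable.congr ?_
  have hae : ∀ᵐ s ∂μ, s ∉ N := by
    rw [ae_iff]
    simpa using hNnull
  filter_upwards [hae] with s hs
  simp only [hf', if_neg hs]

theorem main_thm
    (n : ℕ) (hn : 1 ≤ n) (T : ℝ) (hT : 0 < T)
    (α : Fin n → ℝ) (hα : ∀ j, α j ∈ Ioc (0:ℝ) 1)
    (p : ℝ) (hp : ∀ j, 1 / α j < p)
    (f : EuclideanSpace ℝ (Fin n) → ℝ → EuclideanSpace ℝ (Fin n))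
    (hf : (∀ᵐ t ∂(volume.restrict (Icc (0:ℝ) T)), Continuous fun x => f x t) ∧
      (∀ x, Measurable fun t => f x t) ∧
      (∃ C > (0:ℝ), ∃ γ : ℝ → ℝ, MemLp γ (ENNReal.ofReal p) (volume.restrict (Icc (0:ℝ) T)) ∧
        ∀ᵐ t ∂(volume.restrict (Icc (0:ℝ) T)), ∀ x, ‖f x t‖ ≤ C * ‖x‖ + γ t))
    (ξ : EuclideanSpace ℝ (Fin n))
    (φ : ℝ → EuclideanSpace ℝ (Fin n)) (hφ : ContinuousOn φ (Icc 0 T)) :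
    (∀ j, ContinuousOn
      (fun t => ξ j + (Real.Gamma (α j))⁻¹ * ∫ s in (0:ℝ)..t, (t - s) ^ (α j - 1) * f (φ s) s j)
      (Icc (0:ℝ) T)) := by
  obtain ⟨hcont, hmeas, C, hC, γ, hγ, hgrow⟩ := hf
  set μ := volume.restrict (Icc (0:ℝ) T) with hμ
  haveI : IsFiniteMeasure μ := by
    constructor
    rw [hμ, Measure.restrict_apply_univ]
    exact measure_Icc_lt_top
  -- 1 < p
  have hp1 : 1 < p := by
    have j0 : Fin n := ⟨0, hn⟩
    have h1 : 1 ≤ 1 / α j0 := by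
      rw [le_div_iff₀ (hα j0).1]
      simpa using (hα j0).2
    exact lt_of_le_of_lt h1 (hp j0)
  have hpq : p.HolderConjugate (p / (p - 1)) := Real.HolderConjugate.conjExponent hp1
  set q := p / (p - 1) with hq_def
  -- continuous extension of φ
  set ψ : ℝ → EuclideanSpace ℝ (Fin n) := fun s => φ (max 0 (min s T)) with hψ_def
  have hclamp : Continuous fun s : ℝ => max 0 (min s T) :=
    (continuous_const.max (continuous_id.min continuous_const)).comp continuous_id
  have hmem : ∀ s : ℝ, max 0 (min s T) ∈ Icc (0:ℝ) T :=
    fun s => ⟨le_max_left _ _, max_le hT.le (min_le_right _ _)⟩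
  have hψ : Continuous ψ := hφ.comp_continuous hclamp hmem
  have hψeq : ∀ s ∈ Icc (0:ℝ) T, ψ s = φ s := by
    intro s hs
    simp only [hψ_def]
    rw [min_eq_left hs.2, max_eq_right hs.1]
  -- measurability of the composition
  have hG : AEStronglyMeasurable (fun s => f (φ s) s) μ := by
    refine (comp_aestronglyMeasurable hcont hmeas hψ).congr ?_
    filter_upwards [ae_restrict_mem measurableSet_Icc] with s hs
    rw [hψeq s hs]
  -- bound on φ
  obtain ⟨Mφ, hMφ⟩ := isCompact_Icc.exists_bound_of_continuousOn hφ
  -- each coordinate is in L^p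
  have hgmem : ∀ j, MemLp (fun s => f (φ s) s j) (ENNReal.ofReal p) μ := by
    intro j
    have hmeasj : AEStronglyMeasurable (fun s => f (φ s) s j) μ :=
      ((EuclideanSpace.proj j : EuclideanSpace ℝ (Fin n) →L[ℝ] ℝ).continuous.comp_aestronglyMeasurable hG)
    refine MemLp.mono' ((memLp_const (C * Mφ)).add hγ) hmeasj ?_
    filter_upwards [hgrow, ae_restrict_mem measurableSet_Icc] with s hs hsIcc
    have h1 : |f (φ s) s j| ≤ ‖f (φ s) s‖ := coord_le_norm _ j
    have h2 : ‖f (φ s) s‖ ≤ C * ‖φ s‖ + γ s := hs (φ s)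
    have h3 : C * ‖φ s‖ ≤ C * Mφ := by
      exact mul_le_mul_of_nonneg_left (hMφ s hsIcc) hC.le
    calc ‖f (φ s) s j‖ = |f (φ s) s j| := rfl
      _ ≤ C * Mφ + γ s := by linarith
  intro j
  -- exponent conditions
  have hα1 := (hα j).1
  have hβ : -1 < α j - 1 := by linarith
  have hβ0 : α j - 1 ≤ 0 := by linarith [(hα j).2]
  have hσ : 0 < (α j - 1) * q + 1 := by
    have h1 : 1 < p * α j := (div_lt_iff₀ hα1).1 (hp j)
    have h2 : 0 < α j * p - 1 := by nlinarith
    have hmul : ((α j - 1) * q + 1) * (p - 1) = α j * p - 1 := by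
      have h := hpq.sub_one_mul_conj
      calc ((α j - 1) * q + 1) * (p - 1) = (α j - 1) * ((p - 1) * q) + (p - 1) := by ring
        _ = (α j - 1) * p + (p - 1) := by rw [h]
        _ = α j * p - 1 := by ring
    by_contra hneg
    push_neg at hneg
    nlinarith
  have hcj := continuousOn_fracInt hβ hβ0 hpq hσ (hgmem j)
  exact continuousOn_const.add (continuousOn_const.mul hcj)


end Helpers

/-- For an `L^p`-Carathéodory `f` with `p > max 1/α_j`, each component
`t ↦ ξ_j + J^{α_j} f_j(φ(·),·)(t)` is continuous on `[0,T]`; hence the operator `𝒯`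
maps `C([0,T];ℝⁿ)` into itself. -/
theorem caraOp_maps_continuous_into_continuous
    (n : ℕ) (hn : 1 ≤ n) (T : ℝ) (hT : 0 < T)
    (α : Fin n → ℝ) (hα : ∀ j, α j ∈ Ioc (0:ℝ) 1)
    (p : ℝ) (hp : ∀ j, 1 / α j < p)
    (f : EuclideanSpace ℝ (Fin n) → ℝ → EuclideanSpace ℝ (Fin n))
    (hf : IsLpCaratheodory p T f) (ξ : EuclideanSpace ℝ (Fin n))
    (φ : ℝ → EuclideanSpace ℝ (Fin n)) (hφ : ContinuousOn φ (Icc 0 T)) :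
    (∀ j, ContinuousOn
      (fun t => ξ j + (Real.Gamma (α j))⁻¹ * ∫ s in (0:ℝ)..t, (t - s) ^ (α j - 1) * f (φ s) s j)
      (Icc (0:ℝ) T)) ∧
    ContinuousOn (caraOp α f ξ φ) (Icc (0:ℝ) T) := by
  obtain ⟨⟨hcont, hmeas⟩, ⟨C, hC, γ, hγ, hgrow⟩, -⟩ := hf
  have h1 := main_thm n hn T hT α hα p hp f ⟨hcont, hmeas, C, hC, γ, hγ, hgrow⟩ ξ φ hφ
  refine ⟨h1, ?_⟩
  have heq : caraOp α f ξ φ = fun t => (EuclideanSpace.equiv (Fin n) ℝ).symm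
      (fun j => ξ j + (Real.Gamma (α j))⁻¹ * ∫ s in (0:ℝ)..t, (t - s) ^ (α j - 1) * f (φ s) s j) := by
    funext t
    rfl
  rw [heq]
  exact (EuclideanSpace.equiv (Fin n) ℝ).symm.continuous.comp_continuousOn
    (continuousOn_pi.2 h1)
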